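/- Let (Ω, P) be a probability space and let a, b : Fin 2 → Ω → ZMod 2 be measurable functions (a shared-randomness classical strategy for the CHSH game). Then (1/4) Σ_{x,y ∈ {0,1}} P[{ω : a x ω + b y ω = x·y}] ≤ 3/4. In particular, no deterministic assignment a₀, a₁, b₀, b₁ ∈ ZMod 2 satisfies a₀+b₀ = 0, a₁+b₀ = 0, a₀+b₁ = 0, and a₁+b₁ = 1 simultaneously. -/
import Mathlib


open MeasureTheory

private lemma chsh_meas {Ω : Type*} [MeasurableSpace Ω] (f g : Ω → ZMod 2)
    (hf : @Measurable Ω (ZMod 2) _ ⊤ f) (hg : @Measurable Ω (ZMod 2) _ ⊤ g)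
    (c : ZMod 2) : MeasurableSet {ω | f ω + g ω = c} := by
  have : {ω | f ω + g ω = c} = ⋃ u : ZMod 2, (f ⁻¹' {u}) ∩ (g ⁻¹' {c - u}) := by
    ext ω
    simp only [Set.mem_setOf_eq, Set.mem_iUnion, Set.mem_inter_iff, Set.mem_preimage,
      Set.mem_singleton_iff]
    constructor
    · intro h
      exact ⟨f ω, rfl, by rw [← h]; ring⟩
    · rintro ⟨u, hu, hv⟩
      rw [hu, hv]; ring
  rw [this]
  exact MeasurableSet.iUnion fun u =>
    (hf (MeasurableSpace.measurableSet_top)).inter (hg (MeasurableSpace.measurableSet_top))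

/-- **Classical bound on the CHSH game.** Any shared-randomness classical strategy,
given by measurable response functions `a b : Fin 2 → Ω → ZMod 2` on a probability
space, wins the CHSH game with probability at most `3/4`; in particular, no
deterministic assignment satisfies all four CHSH win conditions simultaneously. -/
theorem chsh_classical_value {Ω : Type*} [MeasurableSpace Ω] (μ : Measure Ω)
    [IsProbabilityMeasure μ] (a b : Fin 2 → Ω → ZMod 2)
    (ha : ∀ x, @Measurable Ω (ZMod 2) _ ⊤ (a x))
    (hb : ∀ y, @Measurable Ω (ZMod 2) _ ⊤ (b y)) :
    ((1 : ℝ) / 4) * ∑ x : Fin 2, ∑ y : Fin 2,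
        (μ {ω | a x ω + b y ω = ((x.val * y.val : ℕ) : ZMod 2)}).toReal ≤ 3 / 4
      ∧ ¬ ∃ a₀ a₁ b₀ b₁ : ZMod 2,
          a₀ + b₀ = 0 ∧ a₁ + b₀ = 0 ∧ a₀ + b₁ = 0 ∧ a₁ + b₁ = 1 := by
  constructor
  · -- the probability bound
    set A : Fin 2 → Fin 2 → Set Ω :=
      fun x y => {ω | a x ω + b y ω = ((x.val * y.val : ℕ) : ZMod 2)} with hA
    have hmeas : ∀ x y, MeasurableSet (A x y) := fun x y =>
      chsh_meas (a x) (b y) (ha x) (hb y) _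
    -- A 1 1 is contained in the union of complements of the other three
    have hsub : A 1 1 ⊆ (A 0 0)ᶜ ∪ (A 0 1)ᶜ ∪ (A 1 0)ᶜ := by
      intro ω h11
      by_contra hc
      simp only [Set.mem_union, Set.mem_compl_iff, not_or, not_not] at hc
      obtain ⟨⟨h00, h01⟩, h10⟩ := hc
      simp only [hA, Set.mem_setOf_eq] at h00 h01 h10 h11
      norm_num at h00 h01 h10 h11
      revert h00 h01 h10 h11
      generalize a 0 ω = p; generalize a 1 ω = q
      generalize b 0 ω = r; generalize b 1 ω = s
      revert p q r s; decide
    have key : μ (A 0 0) + μ (A 0 1) + μ (A 1 0) + μ (A 1 1) ≤ 3 := by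
      have h11 : μ (A 1 1) ≤ μ (A 0 0)ᶜ + μ (A 0 1)ᶜ + μ (A 1 0)ᶜ :=
        le_trans (measure_mono hsub)
          (le_trans (measure_union_le _ _) (by gcongr; exact measure_union_le _ _))
      have comp : ∀ x y, μ (A x y) + μ (A x y)ᶜ = 1 := fun x y => by
        rw [← measure_union (disjoint_compl_right) (hmeas x y).compl, Set.union_compl_self,
          measure_univ]
      calc μ (A 0 0) + μ (A 0 1) + μ (A 1 0) + μ (A 1 1)
          ≤ μ (A 0 0) + μ (A 0 1) + μ (A 1 0) + (μ (A 0 0)ᶜ + μ (A 0 1)ᶜ + μ (A 1 0)ᶜ) := by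
            gcongr
        _ = (μ (A 0 0) + μ (A 0 0)ᶜ) + (μ (A 0 1) + μ (A 0 1)ᶜ) + (μ (A 1 0) + μ (A 1 0)ᶜ) := by
            ring
        _ = 3 := by rw [comp, comp, comp]; norm_num
    have hne : ∀ x y, μ (A x y) ≠ ⊤ := fun x y => measure_ne_top μ _
    have keyR : (μ (A 0 0)).toReal + (μ (A 0 1)).toReal + (μ (A 1 0)).toReal
        + (μ (A 1 1)).toReal ≤ 3 := by
      have := ENNReal.toReal_mono (by norm_num) key
      rw [ENNReal.toReal_add, ENNReal.toReal_add, ENNReal.toReal_add] at this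
      · simpa using this
      all_goals first
        | exact hne _ _
        | exact ENNReal.add_ne_top.2 ⟨ENNReal.add_ne_top.2 ⟨hne _ _, hne _ _⟩, hne _ _⟩
        | exact ENNReal.add_ne_top.2 ⟨hne _ _, hne _ _⟩
    rw [Fin.sum_univ_two]
    simp only [Fin.sum_univ_two]
    linarith [keyR]
  · rintro ⟨a₀, a₁, b₀, b₁, h⟩
    revert h
    revert a₀ a₁ b₀ b₁
    decide
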